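/- arXiv:2505.13946 — 3 statements merged into one kernel-verified Lean document; each statement's English description precedes it below -/
import Mathlib

section
/- Let X, Y, Z be discrete random variables such that Z is conditionally independent of Y given X (Markov chain Y ↔ X ↔ Z). Then for any conditional pmf q(y|z) with q(y|z) > 0 on the support of p(y,z), the mutual information satisfies I(Z;Y) ≥ E_{(x,y)∼p} E_{z∼p(·|x)}[log q(y|z)] + H(Y), where H(Y) is the Shannon entropy of Y. In particular, since H(Y) ≥ 0, I(Z;Y) ≥ E_{(x,y)} E_{z|x}[log q(y|z)]. -/
open Finset

noncomputable section

/-- Mutual information of a joint pmf on `α × β` (natural log). -/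
def MIjoint {α β : Type*} [Fintype α] [Fintype β] (p : α × β → ℝ) : ℝ :=
  ∑ a, ∑ b, p (a, b) * Real.log (p (a, b) / ((∑ b', p (a, b')) * (∑ a', p (a', b))))

/-- Shannon entropy of a finite pmf (natural log). -/
def Entropy {α : Type*} [Fintype α] (p : α → ℝ) : ℝ :=
  -∑ a, p a * Real.log (p a)

theorem ib_key {𝒵 𝒴 : Type*} [Fintype 𝒵] [Fintype 𝒴]
    (P q : 𝒵 → 𝒴 → ℝ)
    (hP0 : ∀ z y, 0 ≤ P z y) (hP1 : ∑ z, ∑ y, P z y = 1)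
    (hq0 : ∀ z y, 0 ≤ q z y) (hq1 : ∀ z, ∑ y, q z y = 1)
    (hqpos : ∀ z y, 0 < P z y → 0 < q z y) :
    ∑ z, ∑ y, P z y * Real.log (P z y / ((∑ y', P z y') * (∑ z', P z' y)))
      ≥ (∑ z, ∑ y, P z y * Real.log (q z y))
        + (- ∑ y, (∑ z, P z y) * Real.log (∑ z, P z y)) := by
  have hPZ0 : ∀ z, 0 ≤ ∑ y', P z y' := fun z => Finset.sum_nonneg fun y _ => hP0 z y
  have key : ∑ z, ∑ y, (P z y * Real.log (q z y) - P z y * Real.log (∑ z', P z' y)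
      - P z y * Real.log (P z y / ((∑ y', P z y') * (∑ z', P z' y))))
      ≤ ∑ z, ∑ y, (q z y * (∑ y', P z y') - P z y) := by
    refine Finset.sum_le_sum fun z _ => Finset.sum_le_sum fun y _ => ?_
    rcases eq_or_lt_of_le (hP0 z y) with h0 | hpos
    · rw [← h0]
      simp only [zero_mul, add_zero, sub_zero, zero_add, sub_zero]
      have := mul_nonneg (hq0 z y) (hPZ0 z)
      linarith
    · have hq : 0 < q z y := hqpos z y hpos
      have hPZ : 0 < ∑ y', P z y' :=
        lt_of_lt_of_le hpos (Finset.single_le_sum (fun y' _ => hP0 z y') (Finset.mem_univ y))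
      have hPY : 0 < ∑ z', P z' y :=
        lt_of_lt_of_le hpos (Finset.single_le_sum (fun z' _ => hP0 z' y) (Finset.mem_univ z))
      have hlog : Real.log (P z y / ((∑ y', P z y') * (∑ z', P z' y)))
          = Real.log (P z y) - (Real.log (∑ y', P z y') + Real.log (∑ z', P z' y)) := by
        rw [Real.log_div (ne_of_gt hpos) (ne_of_gt (mul_pos hPZ hPY)),
          Real.log_mul (ne_of_gt hPZ) (ne_of_gt hPY)]
      rw [hlog]
      have h4 : P z y * (Real.log (q z y) + Real.log (∑ y', P z y') - Real.log (P z y))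
          = P z y * Real.log (q z y) + P z y * Real.log (∑ y', P z y')
            - P z y * Real.log (P z y) := by ring
      have h5 : P z y * (Real.log (P z y)
          - (Real.log (∑ y', P z y') + Real.log (∑ z', P z' y)))
          = P z y * Real.log (P z y) - P z y * Real.log (∑ y', P z y')
            - P z y * Real.log (∑ z', P z' y) := by ring
      have hratio : 0 < q z y * (∑ y', P z y') / P z y :=
        div_pos (mul_pos hq hPZ) hpos
      have hle : Real.log (q z y * (∑ y', P z y') / P z y)
          ≤ q z y * (∑ y', P z y') / P z y - 1 :=
        Real.log_le_sub_one_of_pos hratio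
      have hexp : Real.log (q z y * (∑ y', P z y') / P z y)
          = Real.log (q z y) + Real.log (∑ y', P z y') - Real.log (P z y) := by
        rw [Real.log_div (ne_of_gt (mul_pos hq hPZ)) (ne_of_gt hpos),
          Real.log_mul (ne_of_gt hq) (ne_of_gt hPZ)]
      have h2 : P z y * (Real.log (q z y) + Real.log (∑ y', P z y') - Real.log (P z y))
          ≤ P z y * (q z y * (∑ y', P z y') / P z y - 1) := by
        rw [← hexp]; exact mul_le_mul_of_nonneg_left hle (le_of_lt hpos)
      have h3 : P z y * (q z y * (∑ y', P z y') / P z y - 1)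
          = q z y * (∑ y', P z y') - P z y := by
        field_simp
      rw [h5]
      linarith [h2, h3, h4]
  have hrhs : ∑ z, ∑ y, (q z y * (∑ y', P z y') - P z y) = 0 := by
    have : ∀ z, ∑ y, (q z y * (∑ y', P z y') - P z y)
        = (∑ y', P z y') - ∑ y, P z y := by
      intro z
      rw [Finset.sum_sub_distrib, ← Finset.sum_mul, hq1, one_mul]
    simp only [this]
    simp [hP1, Finset.sum_sub_distrib]
  have hswap : ∑ y, (∑ z, P z y) * Real.log (∑ z, P z y)
      = ∑ z, ∑ y, P z y * Real.log (∑ z', P z' y) := by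
    rw [Finset.sum_comm]
    refine Finset.sum_congr rfl fun y _ => ?_
    rw [Finset.sum_mul]
  rw [hrhs] at key
  rw [hswap]
  have expand : ∑ z, ∑ y, (P z y * Real.log (q z y) - P z y * Real.log (∑ z', P z' y)
      - P z y * Real.log (P z y / ((∑ y', P z y') * (∑ z', P z' y))))
      = (∑ z, ∑ y, P z y * Real.log (q z y))
        - (∑ z, ∑ y, P z y * Real.log (∑ z', P z' y))
        - ∑ z, ∑ y, P z y * Real.log (P z y / ((∑ y', P z y') * (∑ z', P z' y))) := by
    simp [Finset.sum_sub_distrib]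
  rw [expand] at key
  linarith

/-- Variational lower bound on the relevance term of the IB objective.
The joint law is `p(x,y,z) = pX x * pY x y * pZ x z` (Markov chain
`Y ↔ X ↔ Z`).  For any conditional pmf `q(y|z)` positive on the support of
`p(y,z)`, `I(Z;Y) ≥ E_{(x,y)} E_{z|x}[log q(y|z)] + H(Y)`, and in particular
(since `H(Y) ≥ 0`) `I(Z;Y) ≥ E_{(x,y)} E_{z|x}[log q(y|z)]`. -/
theorem ib_relevance_variational_bound
    {𝒳 𝒴 𝒵 : Type*} [Fintype 𝒳] [Fintype 𝒴] [Fintype 𝒵]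
    (pX : 𝒳 → ℝ) (pY : 𝒳 → 𝒴 → ℝ) (pZ : 𝒳 → 𝒵 → ℝ) (q : 𝒵 → 𝒴 → ℝ)
    (hpX0 : ∀ x, 0 ≤ pX x) (hpX1 : ∑ x, pX x = 1)
    (hpY0 : ∀ x y, 0 ≤ pY x y) (hpY1 : ∀ x, ∑ y, pY x y = 1)
    (hpZ0 : ∀ x z, 0 ≤ pZ x z) (hpZ1 : ∀ x, ∑ z, pZ x z = 1)
    (hq0 : ∀ z y, 0 ≤ q z y) (hq1 : ∀ z, ∑ y, q z y = 1)
    (hqpos : ∀ z y, 0 < ∑ x, pX x * pY x y * pZ x z → 0 < q z y) :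
    (MIjoint (fun zy : 𝒵 × 𝒴 => ∑ x, pX x * pY x zy.2 * pZ x zy.1)
        ≥ (∑ x, ∑ y, pX x * pY x y * ∑ z, pZ x z * Real.log (q z y))
          + Entropy (fun y => ∑ x, pX x * pY x y))
    ∧ MIjoint (fun zy : 𝒵 × 𝒴 => ∑ x, pX x * pY x zy.2 * pZ x zy.1)
        ≥ ∑ x, ∑ y, pX x * pY x y * ∑ z, pZ x z * Real.log (q z y) := by
  set P : 𝒵 → 𝒴 → ℝ := fun z y => ∑ x, pX x * pY x y * pZ x z with hP
  have hP0 : ∀ z y, 0 ≤ P z y := fun z y =>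
    Finset.sum_nonneg fun x _ => mul_nonneg (mul_nonneg (hpX0 x) (hpY0 x y)) (hpZ0 x z)
  have hP1 : ∑ z, ∑ y, P z y = 1 := by
    rw [Finset.sum_comm]
    have : ∀ y, ∑ z, P z y = ∑ x, pX x * pY x y := by
      intro y
      rw [Finset.sum_comm]
      refine Finset.sum_congr rfl fun x _ => ?_
      rw [← Finset.mul_sum, hpZ1, mul_one]
    simp_rw [this]
    rw [Finset.sum_comm]
    simp_rw [← Finset.mul_sum, hpY1, mul_one, hpX1]
  have hmarg : ∀ y, ∑ z, P z y = ∑ x, pX x * pY x y := by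
    intro y
    rw [Finset.sum_comm]
    refine Finset.sum_congr rfl fun x _ => ?_
    rw [← Finset.mul_sum, hpZ1, mul_one]
  have hE : ∑ x, ∑ y, pX x * pY x y * ∑ z, pZ x z * Real.log (q z y)
      = ∑ z, ∑ y, P z y * Real.log (q z y) := by
    have rhs : ∑ z, ∑ y, P z y * Real.log (q z y)
        = ∑ y, ∑ x, ∑ z, pX x * pY x y * pZ x z * Real.log (q z y) := by
      rw [Finset.sum_comm]
      refine Finset.sum_congr rfl fun y _ => ?_
      simp_rw [hP, Finset.sum_mul]
      rw [Finset.sum_comm]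
    rw [rhs, Finset.sum_comm]
    refine Finset.sum_congr rfl fun y _ => Finset.sum_congr rfl fun x _ => ?_
    rw [Finset.mul_sum]
    refine Finset.sum_congr rfl fun z _ => by ring
  have hMI : MIjoint (fun zy : 𝒵 × 𝒴 => ∑ x, pX x * pY x zy.2 * pZ x zy.1)
      = ∑ z, ∑ y, P z y * Real.log (P z y / ((∑ y', P z y') * (∑ z', P z' y))) := rfl
  have hH : Entropy (fun y => ∑ x, pX x * pY x y)
      = - ∑ y, (∑ z, P z y) * Real.log (∑ z, P z y) := by
    simp_rw [Entropy, hmarg]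
  have main := ib_key P q hP0 hP1 hq0 hq1 hqpos
  have h1 : MIjoint (fun zy : 𝒵 × 𝒴 => ∑ x, pX x * pY x zy.2 * pZ x zy.1)
      ≥ (∑ x, ∑ y, pX x * pY x y * ∑ z, pZ x z * Real.log (q z y))
        + Entropy (fun y => ∑ x, pX x * pY x y) := by
    rw [hMI, hE, hH]; exact main
  refine ⟨h1, ?_⟩
  have hHnn : 0 ≤ Entropy (fun y => ∑ x, pX x * pY x y) := by
    rw [Entropy, neg_nonneg]
    refine Finset.sum_nonpos fun y _ => ?_
    have h0 : 0 ≤ ∑ x, pX x * pY x y :=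
      Finset.sum_nonneg fun x _ => mul_nonneg (hpX0 x) (hpY0 x y)
    have h1' : (∑ x, pX x * pY x y) ≤ 1 := by
      calc (∑ x, pX x * pY x y) = ∑ z, P z y := (hmarg y).symm
        _ ≤ ∑ y', ∑ z, P z y' :=
            Finset.single_le_sum (fun y' _ => Finset.sum_nonneg fun z _ => hP0 z y')
              (Finset.mem_univ y)
        _ = 1 := by rw [Finset.sum_comm]; exact hP1
    exact mul_nonpos_of_nonneg_of_nonpos h0 (Real.log_nonpos h0 h1')
  linarith
end
end

section
/- Combining the two variational bounds: for discrete random variables X, Y, Z with Markov chain Y ↔ X ↔ Z, any prior pmf r on 𝒵 and any conditional pmf q(y|z) (both positive on the relevant supports), and any β ≥ 0, the IB objective satisfies I(Z;Y) - β·I(Z;X) ≥ E_{(x,y)}E_{z|x}[log q(y|z)] - β·E_x[D_KL(p(·|x) || r)]. -/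
open Finset

noncomputable section

/-- Kullback–Leibler divergence between finite pmfs (natural log). -/
def KLdiv {𝒵 : Type*} [Fintype 𝒵] (p q : 𝒵 → ℝ) : ℝ :=
  ∑ z, p z * Real.log (p z / q z)

/-- Gibbs' inequality (finite, possibly unnormalized). -/
lemma gibbs_aux {ι : Type*} [Fintype ι] (p q : ι → ℝ)
    (hp : ∀ i, 0 ≤ p i) (hq : ∀ i, 0 ≤ q i)
    (hpos : ∀ i, 0 < p i → 0 < q i)
    (hsum : ∑ i, q i ≤ ∑ i, p i) :
    0 ≤ ∑ i, p i * Real.log (p i / q i) := by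
  have key : ∀ i ∈ Finset.univ, p i - q i ≤ p i * Real.log (p i / q i) := by
    intro i _
    rcases eq_or_lt_of_le (hp i) with h | h
    · simp [← h]; exact hq i
    · have hqi := hpos i h
      have ht : 0 < q i / p i := div_pos hqi h
      have hlog1 := Real.log_le_sub_one_of_pos ht
      have hlog : Real.log (p i / q i) = - Real.log (q i / p i) := by
        rw [← Real.log_inv, inv_div]
      have hpq : p i * (q i / p i) = q i := by field_simp
      nlinarith [mul_le_mul_of_nonneg_left hlog1 h.le]
  calc (0:ℝ) ≤ ∑ i, (p i - q i) := by rw [Finset.sum_sub_distrib]; linarith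
    _ ≤ _ := Finset.sum_le_sum key

section aux

variable {𝒳 𝒴 𝒵 : Type*} [Fintype 𝒳] [Fintype 𝒴] [Fintype 𝒵]

/-- First variational bound: `I(Z;Y) ≥ E[log q(y|z)]`. -/
lemma ib_bound1
    (pX : 𝒳 → ℝ) (pY : 𝒳 → 𝒴 → ℝ) (pZ : 𝒳 → 𝒵 → ℝ) (q : 𝒵 → 𝒴 → ℝ)
    (hpX0 : ∀ x, 0 ≤ pX x) (hpX1 : ∑ x, pX x = 1)
    (hpY0 : ∀ x y, 0 ≤ pY x y) (hpY1 : ∀ x, ∑ y, pY x y = 1)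
    (hpZ0 : ∀ x z, 0 ≤ pZ x z) (hpZ1 : ∀ x, ∑ z, pZ x z = 1)
    (hq0 : ∀ z y, 0 ≤ q z y) (hq1 : ∀ z, ∑ y, q z y = 1)
    (hqpos : ∀ z y, 0 < ∑ x, pX x * pY x y * pZ x z → 0 < q z y) :
    (∑ z, ∑ y, (∑ x, pX x * pY x y * pZ x z) * Real.log (q z y))
      ≤ MIjoint (fun zy : 𝒵 × 𝒴 => ∑ x, pX x * pY x zy.2 * pZ x zy.1) := by
  set P : 𝒵 → 𝒴 → ℝ := fun z y => ∑ x, pX x * pY x y * pZ x z with hPdef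
  set Pm : 𝒵 → ℝ := fun z => ∑ x, pX x * pZ x z with hPmdef
  set Ym : 𝒴 → ℝ := fun y => ∑ x, pX x * pY x y with hYmdef
  have hP0 : ∀ z y, 0 ≤ P z y := fun z y =>
    Finset.sum_nonneg fun x _ => mul_nonneg (mul_nonneg (hpX0 x) (hpY0 x y)) (hpZ0 x z)
  have hPm0 : ∀ z, 0 ≤ Pm z := fun z =>
    Finset.sum_nonneg fun x _ => mul_nonneg (hpX0 x) (hpZ0 x z)
  have hYm0 : ∀ y, 0 ≤ Ym y := fun y =>
    Finset.sum_nonneg fun x _ => mul_nonneg (hpX0 x) (hpY0 x y)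
  have hPy : ∀ z, ∑ y, P z y = Pm z := by
    intro z
    rw [hPdef, hPmdef, Finset.sum_comm]
    refine Finset.sum_congr rfl fun x _ => ?_
    simp_rw [show ∀ y, pX x * pY x y * pZ x z = (pX x * pZ x z) * pY x y from
      fun y => by ring, ← Finset.mul_sum, hpY1, mul_one]
  have hPz : ∀ y, ∑ z, P z y = Ym y := by
    intro y
    rw [hPdef, hYmdef, Finset.sum_comm]
    refine Finset.sum_congr rfl fun x _ => ?_
    simp_rw [← Finset.mul_sum, hpZ1, mul_one]
  have hPm1 : ∑ z, Pm z = 1 := by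
    rw [hPmdef, Finset.sum_comm]
    simp_rw [← Finset.mul_sum, hpZ1, mul_one]
    exact hpX1
  have hYm1 : ∑ y, Ym y = 1 := by
    rw [hYmdef, Finset.sum_comm]
    simp_rw [← Finset.mul_sum, hpY1, mul_one]
    exact hpX1
  have hMI : MIjoint (fun zy : 𝒵 × 𝒴 => ∑ x, pX x * pY x zy.2 * pZ x zy.1)
      = ∑ z, ∑ y, P z y * Real.log (P z y / (Pm z * Ym y)) := by
    unfold MIjoint
    refine Finset.sum_congr rfl fun z _ => Finset.sum_congr rfl fun y _ => ?_
    simp only []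
    rw [hPy z, hPz y]
  rw [hMI]
  have split : ∀ z, ∀ y, P z y * Real.log (P z y / (Pm z * Ym y))
      = P z y * Real.log (P z y / (Pm z * q z y)) + P z y * (- Real.log (Ym y))
        + P z y * Real.log (q z y) := by
    intro z y
    rcases eq_or_lt_of_le (hP0 z y) with h | h
    · simp [← h]
    · have hq' : 0 < q z y := hqpos z y h
      have hPmz : 0 < Pm z := lt_of_lt_of_le h (by
        rw [← hPy z]
        exact Finset.single_le_sum (fun y' _ => hP0 z y') (Finset.mem_univ y))
      have hYmy : 0 < Ym y := lt_of_lt_of_le h (by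
        rw [← hPz y]
        exact Finset.single_le_sum (fun z' _ => hP0 z' y) (Finset.mem_univ z))
      rw [Real.log_div h.ne' (by positivity), Real.log_div h.ne' (by positivity),
        Real.log_mul hPmz.ne' hYmy.ne', Real.log_mul hPmz.ne' hq'.ne']
      ring
  simp_rw [split, Finset.sum_add_distrib]
  have hA : 0 ≤ ∑ z, ∑ y, P z y * Real.log (P z y / (Pm z * q z y)) := by
    have := gibbs_aux (ι := 𝒵 × 𝒴) (fun i => P i.1 i.2)
      (fun i => Pm i.1 * q i.1 i.2)
      (fun i => hP0 i.1 i.2)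
      (fun i => mul_nonneg (hPm0 i.1) (hq0 i.1 i.2))
      (fun i hi => mul_pos (lt_of_lt_of_le hi (by
        rw [← hPy i.1]
        exact Finset.single_le_sum (fun y' _ => hP0 i.1 y') (Finset.mem_univ i.2)))
        (hqpos i.1 i.2 hi))
      (by
        rw [Fintype.sum_prod_type, Fintype.sum_prod_type]
        simp_rw [← Finset.mul_sum, hq1, mul_one, hPy]
        exact le_refl _)
    rwa [Fintype.sum_prod_type] at this
  have hB : 0 ≤ ∑ z, ∑ y, P z y * (- Real.log (Ym y)) := by
    rw [Finset.sum_comm]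
    refine Finset.sum_nonneg fun y _ => ?_
    rw [← Finset.sum_mul, hPz y]
    have hle1 : Ym y ≤ 1 := by
      rw [← hYm1]
      exact Finset.single_le_sum (fun y' _ => hYm0 y') (Finset.mem_univ y)
    have := Real.log_nonpos (hYm0 y) hle1
    nlinarith [hYm0 y]
  linarith

/-- Second variational bound: `I(Z;X) ≤ E_x[KL(p(z|x) ‖ r)]`. -/
lemma ib_bound2
    (pX : 𝒳 → ℝ) (pZ : 𝒳 → 𝒵 → ℝ) (r : 𝒵 → ℝ)
    (hpX0 : ∀ x, 0 ≤ pX x) (hpX1 : ∑ x, pX x = 1)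
    (hpZ0 : ∀ x z, 0 ≤ pZ x z) (hpZ1 : ∀ x, ∑ z, pZ x z = 1)
    (hr0 : ∀ z, 0 ≤ r z) (hr1 : ∑ z, r z = 1)
    (hrpos : ∀ z, 0 < ∑ x, pX x * pZ x z → 0 < r z) :
    MIjoint (fun zx : 𝒵 × 𝒳 => pX zx.2 * pZ zx.2 zx.1)
      ≤ ∑ x, pX x * KLdiv (fun z => pZ x z) r := by
  set Pm : 𝒵 → ℝ := fun z => ∑ x, pX x * pZ x z with hPmdef
  have hPm0 : ∀ z, 0 ≤ Pm z := fun z =>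
    Finset.sum_nonneg fun x _ => mul_nonneg (hpX0 x) (hpZ0 x z)
  have hPm1 : ∑ z, Pm z = 1 := by
    rw [hPmdef, Finset.sum_comm]
    simp_rw [← Finset.mul_sum, hpZ1, mul_one]
    exact hpX1
  have hMI : MIjoint (fun zx : 𝒵 × 𝒳 => pX zx.2 * pZ zx.2 zx.1)
      = ∑ z, ∑ x, pX x * pZ x z * Real.log (pX x * pZ x z / (Pm z * pX x)) := by
    unfold MIjoint
    refine Finset.sum_congr rfl fun z _ => Finset.sum_congr rfl fun x _ => ?_
    simp only []
    have h2 : (∑ a', pX x * pZ x a') = pX x := by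
      rw [← Finset.mul_sum, hpZ1, mul_one]
    rw [h2]
  rw [hMI]
  have hK : (∑ x, pX x * KLdiv (fun z => pZ x z) r)
      = ∑ z, ∑ x, pX x * (pZ x z * Real.log (pZ x z / r z)) := by
    rw [Finset.sum_comm]
    refine Finset.sum_congr rfl fun x _ => ?_
    rw [KLdiv, Finset.mul_sum]
  rw [hK]
  have split : ∀ z, ∀ x, pX x * (pZ x z * Real.log (pZ x z / r z))
      = pX x * pZ x z * Real.log (pX x * pZ x z / (Pm z * pX x))
        + pX x * pZ x z * Real.log (Pm z / r z) := by
    intro z x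
    rcases eq_or_lt_of_le (mul_nonneg (hpX0 x) (hpZ0 x z)) with h | h
    · rcases mul_eq_zero.mp h.symm with h' | h' <;> simp [h']
    · rcases mul_pos_iff.mp h with ⟨hx, hz⟩ | ⟨hx, _⟩
      · have hPmz : 0 < Pm z := lt_of_lt_of_le h
          (Finset.single_le_sum (fun x' _ => mul_nonneg (hpX0 x') (hpZ0 x' z))
            (Finset.mem_univ x))
        have hr' : 0 < r z := hrpos z hPmz
        rw [Real.log_div hz.ne' hr'.ne',
          Real.log_div h.ne' (mul_pos hPmz hx).ne',
          Real.log_div hPmz.ne' hr'.ne',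
          Real.log_mul hx.ne' hz.ne', Real.log_mul hPmz.ne' hx.ne']
        ring
      · exact absurd hx (not_lt.mpr (hpX0 x))
  simp_rw [split, Finset.sum_add_distrib]
  have hC : 0 ≤ ∑ z, ∑ x, pX x * pZ x z * Real.log (Pm z / r z) := by
    have h0 := gibbs_aux (ι := 𝒵) Pm r hPm0 hr0 (fun z hz => hrpos z hz)
      (by rw [hr1, hPm1])
    calc (0:ℝ) ≤ ∑ z, Pm z * Real.log (Pm z / r z) := h0
      _ = _ := by
        refine Finset.sum_congr rfl fun z _ => ?_
        rw [← Finset.sum_mul]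
  linarith

end aux

/-- Variational lower bound on the information bottleneck objective (Eq. 4 of
the paper, without the bimodal decomposition).  The joint law is
`p(x,y,z) = pX x * pY x y * pZ x z` (Markov chain `Y ↔ X ↔ Z`): for any prior
pmf `r` on `𝒵` and conditional pmf `q(y|z)` (positive on relevant supports)
and any `β ≥ 0`,
`I(Z;Y) - β·I(Z;X) ≥ E_{(x,y)}E_{z|x}[log q(y|z)] - β·E_x[D_KL(p(·|x) ‖ r)]`. -/
theorem ib_variational_lower_bound
    {𝒳 𝒴 𝒵 : Type*} [Fintype 𝒳] [Fintype 𝒴] [Fintype 𝒵]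
    (pX : 𝒳 → ℝ) (pY : 𝒳 → 𝒴 → ℝ) (pZ : 𝒳 → 𝒵 → ℝ)
    (q : 𝒵 → 𝒴 → ℝ) (r : 𝒵 → ℝ) (β : ℝ) (hβ : 0 ≤ β)
    (hpX0 : ∀ x, 0 ≤ pX x) (hpX1 : ∑ x, pX x = 1)
    (hpY0 : ∀ x y, 0 ≤ pY x y) (hpY1 : ∀ x, ∑ y, pY x y = 1)
    (hpZ0 : ∀ x z, 0 ≤ pZ x z) (hpZ1 : ∀ x, ∑ z, pZ x z = 1)
    (hq0 : ∀ z y, 0 ≤ q z y) (hq1 : ∀ z, ∑ y, q z y = 1)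
    (hqpos : ∀ z y, 0 < ∑ x, pX x * pY x y * pZ x z → 0 < q z y)
    (hr0 : ∀ z, 0 ≤ r z) (hr1 : ∑ z, r z = 1)
    (hrpos : ∀ z, 0 < ∑ x, pX x * pZ x z → 0 < r z) :
    MIjoint (fun zy : 𝒵 × 𝒴 => ∑ x, pX x * pY x zy.2 * pZ x zy.1)
        - β * MIjoint (fun zx : 𝒵 × 𝒳 => pX zx.2 * pZ zx.2 zx.1)
      ≥ (∑ x, ∑ y, pX x * pY x y * ∑ z, pZ x z * Real.log (q z y))
        - β * ∑ x, pX x * KLdiv (fun z => pZ x z) r := by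
  have hE : (∑ x, ∑ y, pX x * pY x y * ∑ z, pZ x z * Real.log (q z y))
      = ∑ z, ∑ y, (∑ x, pX x * pY x y * pZ x z) * Real.log (q z y) := by
    have step : ∀ x, ∀ y, pX x * pY x y * ∑ z, pZ x z * Real.log (q z y)
        = ∑ z, pX x * pY x y * pZ x z * Real.log (q z y) := by
      intro x y
      rw [Finset.mul_sum]
      exact Finset.sum_congr rfl fun z _ => by ring
    simp_rw [step, Finset.sum_mul]
    calc (∑ x, ∑ y, ∑ z, pX x * pY x y * pZ x z * Real.log (q z y))
        = ∑ x, ∑ z, ∑ y, pX x * pY x y * pZ x z * Real.log (q z y) :=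
          Finset.sum_congr rfl fun x _ => Finset.sum_comm
      _ = ∑ z, ∑ x, ∑ y, pX x * pY x y * pZ x z * Real.log (q z y) :=
          Finset.sum_comm
      _ = ∑ z, ∑ y, ∑ x, pX x * pY x y * pZ x z * Real.log (q z y) :=
          Finset.sum_congr rfl fun z _ => Finset.sum_comm
  have h1 := ib_bound1 pX pY pZ q hpX0 hpX1 hpY0 hpY1 hpZ0 hpZ1 hq0 hq1 hqpos
  have h2 := ib_bound2 pX pZ r hpX0 hpX1 hpZ0 hpZ1 hr0 hr1 hrpos
  have h3 := mul_le_mul_of_nonneg_left h2 hβ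
  rw [ge_iff_le, hE]
  linarith
end
end

section
/- Suppose X = (X_v, X_t) and Z = (Z_v, Z_t) are discrete random variables with conditional law p(z_v, z_t | x_v, x_t) = p(z_v | x_v) · p(z_t | x_v, x_t) (causal attention structure). Then for any factorized prior r(z_v, z_t) = r_v(z_v) r_t(z_t) positive on the support of the marginal of Z, the mutual information satisfies I(Z; X) ≤ E_{x_v}[D_KL(p(·|x_v) || r_v)] + E_{(x_v,x_t)}[D_KL(p(·|x_v,x_t) || r_t)]. -/
open Finset

noncomputable section

/-- Gibbs' inequality for finite (sub)distributions. -/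
private lemma gibbs_nonneg {𝒵 : Type*} [Fintype 𝒵] (p q : 𝒵 → ℝ)
    (hp0 : ∀ z, 0 ≤ p z) (hp1 : ∑ z, p z = 1)
    (hq0 : ∀ z, 0 ≤ q z) (hq1 : ∑ z, q z ≤ 1)
    (hpos : ∀ z, 0 < p z → 0 < q z) :
    0 ≤ ∑ z, p z * Real.log (p z / q z) := by
  classical
  have key : ∀ z, p z - (if 0 < p z then q z else 0) ≤ p z * Real.log (p z / q z) := by
    intro z
    by_cases h : 0 < p z
    · simp only [if_pos h]
      have hq := hpos z h
      have hlog : Real.log (q z / p z) ≤ q z / p z - 1 :=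
        Real.log_le_sub_one_of_pos (div_pos hq h)
      have h1 : p z * Real.log (q z / p z) ≤ p z * (q z / p z - 1) :=
        mul_le_mul_of_nonneg_left hlog h.le
      have h2 : p z * (q z / p z - 1) = q z - p z := by field_simp
      have h3 : Real.log (p z / q z) = - Real.log (q z / p z) := by
        rw [← Real.log_inv, inv_div]
      rw [h3]
      nlinarith
    · have hz : p z = 0 := le_antisymm (not_lt.mp h) (hp0 z)
      simp [hz, h]
  calc (0:ℝ) ≤ 1 - ∑ z, (if 0 < p z then q z else 0) := by
        have : ∑ z, (if 0 < p z then q z else 0) ≤ ∑ z, q z :=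
          Finset.sum_le_sum fun z _ => by split <;> simp [hq0 z]
        linarith
    _ = ∑ z, (p z - (if 0 < p z then q z else 0)) := by
        rw [Finset.sum_sub_distrib, hp1]
    _ ≤ ∑ z, p z * Real.log (p z / q z) := Finset.sum_le_sum fun z _ => key z

/-- Modality-decomposed rate bound (Eq. 2 of the paper).  With
`X = (X_v, X_t)`, `Z = (Z_v, Z_t)` and the causal-attention factorization
`p(z_v, z_t | x_v, x_t) = p(z_v|x_v)·p(z_t|x_v,x_t)`, for any factorized prior
`r(z_v,z_t) = r_v(z_v) r_t(z_t)` positive on the support of the marginal of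
`Z`, `I(Z;X) ≤ E_{x_v}[D_KL(p(·|x_v) ‖ r_v)] + E_{(x_v,x_t)}[D_KL(p(·|x_v,x_t) ‖ r_t)]`. -/
theorem ib_rate_modality_decomposed_bound
    {𝒳v 𝒳t 𝒵v 𝒵t : Type*} [Fintype 𝒳v] [Fintype 𝒳t] [Fintype 𝒵v] [Fintype 𝒵t]
    (pX : 𝒳v × 𝒳t → ℝ) (pZv : 𝒳v → 𝒵v → ℝ) (pZt : 𝒳v × 𝒳t → 𝒵t → ℝ)
    (rv : 𝒵v → ℝ) (rt : 𝒵t → ℝ)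
    (hpX0 : ∀ x, 0 ≤ pX x) (hpX1 : ∑ x, pX x = 1)
    (hpZv0 : ∀ xv zv, 0 ≤ pZv xv zv) (hpZv1 : ∀ xv, ∑ zv, pZv xv zv = 1)
    (hpZt0 : ∀ x zt, 0 ≤ pZt x zt) (hpZt1 : ∀ x, ∑ zt, pZt x zt = 1)
    (hrv0 : ∀ zv, 0 ≤ rv zv) (hrv1 : ∑ zv, rv zv = 1)
    (hrt0 : ∀ zt, 0 ≤ rt zt) (hrt1 : ∑ zt, rt zt = 1)
    (hrvpos : ∀ zv, 0 < ∑ x : 𝒳v × 𝒳t, pX x * pZv x.1 zv → 0 < rv zv)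
    (hrtpos : ∀ zt, 0 < ∑ x : 𝒳v × 𝒳t, pX x * pZt x zt → 0 < rt zt) :
    MIjoint (fun zx : (𝒵v × 𝒵t) × (𝒳v × 𝒳t) =>
        pX zx.2 * pZv zx.2.1 zx.1.1 * pZt zx.2 zx.1.2)
      ≤ (∑ xv, (∑ xt, pX (xv, xt)) * KLdiv (fun zv => pZv xv zv) rv)
        + ∑ x : 𝒳v × 𝒳t, pX x * KLdiv (fun zt => pZt x zt) rt := by
  classical
  set p : (𝒵v × 𝒵t) × (𝒳v × 𝒳t) → ℝ := fun zx =>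
    pX zx.2 * pZv zx.2.1 zx.1.1 * pZt zx.2 zx.1.2 with hpdef
  have hp0 : ∀ z x, 0 ≤ p (z, x) := fun z x =>
    mul_nonneg (mul_nonneg (hpX0 x) (hpZv0 _ _)) (hpZt0 _ _)
  set m : 𝒵v × 𝒵t → ℝ := fun z => ∑ x : 𝒳v × 𝒳t, p (z, x) with hmdef
  have hm0 : ∀ z, 0 ≤ m z := fun z => Finset.sum_nonneg fun x _ => hp0 z x
  -- marginal over z equals pX
  have hmarg : ∀ x : 𝒳v × 𝒳t, (∑ z : 𝒵v × 𝒵t, p (z, x)) = pX x := by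
    intro x
    rw [Fintype.sum_prod_type]
    have : ∀ zv, ∑ zt, p ((zv, zt), x) = pX x * pZv x.1 zv := by
      intro zv
      simp only [hpdef]
      rw [← Finset.mul_sum, hpZt1, mul_one]
    simp only [this]
    rw [← Finset.mul_sum, hpZv1, mul_one]
  -- total mass one
  have hm1 : ∑ z, m z = 1 := by
    simp only [hmdef]
    rw [Finset.sum_comm]
    simp only [hmarg]
    exact hpX1
  -- extract positivity of factors
  have factor_pos : ∀ (z : 𝒵v × 𝒵t) (x : 𝒳v × 𝒳t), 0 < p (z, x) →
      0 < pX x ∧ 0 < pZv x.1 z.1 ∧ 0 < pZt x z.2 := by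
    intro z x h
    have h1 : pX x ≠ 0 := by intro h0; simp [hpdef, h0] at h
    have h2 : pZv x.1 z.1 ≠ 0 := by intro h0; simp [hpdef, h0] at h
    have h3 : pZt x z.2 ≠ 0 := by intro h0; simp [hpdef, h0] at h
    exact ⟨(hpX0 x).lt_of_ne (Ne.symm h1), (hpZv0 _ _).lt_of_ne (Ne.symm h2),
      (hpZt0 _ _).lt_of_ne (Ne.symm h3)⟩
  have hrv' : ∀ z : 𝒵v × 𝒵t, 0 < m z → 0 < rv z.1 := by
    intro z hmz
    obtain ⟨x, -, hx⟩ : ∃ x ∈ Finset.univ, 0 < p (z, x) := by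
      by_contra hc
      push_neg at hc
      have : m z = 0 := Finset.sum_eq_zero fun x hx =>
        le_antisymm (hc x hx) (hp0 z x)
      exact absurd this (ne_of_gt hmz)
    obtain ⟨h1, h2, h3⟩ := factor_pos z x hx
    exact hrvpos z.1 (Finset.sum_pos' (fun x' _ => mul_nonneg (hpX0 _) (hpZv0 _ _))
      ⟨x, Finset.mem_univ x, mul_pos h1 h2⟩)
  have hrt' : ∀ z : 𝒵v × 𝒵t, 0 < m z → 0 < rt z.2 := by
    intro z hmz
    obtain ⟨x, -, hx⟩ : ∃ x ∈ Finset.univ, 0 < p (z, x) := by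
      by_contra hc
      push_neg at hc
      have : m z = 0 := Finset.sum_eq_zero fun x hx =>
        le_antisymm (hc x hx) (hp0 z x)
      exact absurd this (ne_of_gt hmz)
    obtain ⟨h1, h2, h3⟩ := factor_pos z x hx
    exact hrtpos z.2 (Finset.sum_pos' (fun x' _ => mul_nonneg (hpX0 _) (hpZt0 _ _))
      ⟨x, Finset.mem_univ x, mul_pos h1 h3⟩)
  -- rewrite MI
  have hMI : MIjoint p = ∑ z : 𝒵v × 𝒵t, ∑ x : 𝒳v × 𝒳t,
      p (z, x) * Real.log (p (z, x) / (m z * pX x)) := by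
    unfold MIjoint
    refine Finset.sum_congr rfl fun z _ => Finset.sum_congr rfl fun x _ => ?_
    rw [hmarg x]
  -- termwise identity
  have key : ∀ (z : 𝒵v × 𝒵t) (x : 𝒳v × 𝒳t),
      p (z, x) * Real.log (p (z, x) / (m z * pX x))
        = p (z, x) * (Real.log (pZv x.1 z.1 / rv z.1) + Real.log (pZt x z.2 / rt z.2))
          - p (z, x) * Real.log (m z / (rv z.1 * rt z.2)) := by
    intro z x
    by_cases h : p (z, x) = 0
    · simp [h]
    · have hppos : 0 < p (z, x) := (hp0 z x).lt_of_ne (Ne.symm h)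
      obtain ⟨h1, h2, h3⟩ := factor_pos z x hppos
      have hmz : 0 < m z :=
        lt_of_lt_of_le hppos (Finset.single_le_sum (fun x' _ => hp0 z x') (Finset.mem_univ x))
      have hrv1' := hrv' z hmz
      have hrt1' := hrt' z hmz
      have hpeq : p (z, x) = pX x * pZv x.1 z.1 * pZt x z.2 := rfl
      rw [show p (z, x) / (m z * pX x) = pX x * pZv x.1 z.1 * pZt x z.2 / (m z * pX x) from by rw [← hpeq]]
      rw [Real.log_div (by positivity) (by positivity),
          Real.log_mul (by positivity) (by positivity),
          Real.log_mul (by positivity) (by positivity),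
          Real.log_mul (by positivity) (by positivity),
          Real.log_div (by positivity) (by positivity),
          Real.log_div (by positivity) (by positivity),
          Real.log_div (by positivity) (by positivity),
          Real.log_mul (by positivity) (by positivity)]
      ring
  rw [hMI]
  have hsplit : ∑ z : 𝒵v × 𝒵t, ∑ x : 𝒳v × 𝒳t,
      p (z, x) * Real.log (p (z, x) / (m z * pX x))
      = (∑ z : 𝒵v × 𝒵t, ∑ x : 𝒳v × 𝒳t,
          p (z, x) * (Real.log (pZv x.1 z.1 / rv z.1) + Real.log (pZt x z.2 / rt z.2)))
        - ∑ z : 𝒵v × 𝒵t, m z * Real.log (m z / (rv z.1 * rt z.2)) := by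
    rw [← Finset.sum_sub_distrib]
    refine Finset.sum_congr rfl fun z _ => ?_
    calc ∑ x : 𝒳v × 𝒳t, p (z, x) * Real.log (p (z, x) / (m z * pX x))
        = ∑ x : 𝒳v × 𝒳t,
            (p (z, x) * (Real.log (pZv x.1 z.1 / rv z.1) + Real.log (pZt x z.2 / rt z.2))
              - p (z, x) * Real.log (m z / (rv z.1 * rt z.2))) :=
          Finset.sum_congr rfl fun x _ => key z x
      _ = (∑ x : 𝒳v × 𝒳t,
            p (z, x) * (Real.log (pZv x.1 z.1 / rv z.1) + Real.log (pZt x z.2 / rt z.2)))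
            - ∑ x : 𝒳v × 𝒳t, p (z, x) * Real.log (m z / (rv z.1 * rt z.2)) :=
          Finset.sum_sub_distrib _ _
      _ = _ := by rw [← Finset.sum_mul]
  rw [hsplit]
  -- the correction term is a KL divergence, hence nonnegative
  have hq1 : ∑ z : 𝒵v × 𝒵t, rv z.1 * rt z.2 = 1 := by
    rw [Fintype.sum_prod_type]
    simp only [← Finset.mul_sum, hrt1, mul_one]
    exact hrv1
  have hD : 0 ≤ ∑ z : 𝒵v × 𝒵t, m z * Real.log (m z / (rv z.1 * rt z.2)) :=
    gibbs_nonneg m (fun z => rv z.1 * rt z.2) hm0 hm1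
      (fun z => mul_nonneg (hrv0 _) (hrt0 _)) (le_of_eq hq1)
      (fun z hz => mul_pos (hrv' z hz) (hrt' z hz))
  -- the main term equals the right-hand side
  have hx : ∀ x : 𝒳v × 𝒳t, (∑ z : 𝒵v × 𝒵t,
      p (z, x) * (Real.log (pZv x.1 z.1 / rv z.1) + Real.log (pZt x z.2 / rt z.2)))
      = pX x * (∑ zv, pZv x.1 zv * Real.log (pZv x.1 zv / rv zv))
        + pX x * (∑ zt, pZt x zt * Real.log (pZt x zt / rt zt)) := by
    intro x
    rw [Fintype.sum_prod_type]
    have inner : ∀ zv, (∑ zt, p ((zv, zt), x) *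
        (Real.log (pZv x.1 zv / rv zv) + Real.log (pZt x zt / rt zt)))
        = pX x * (pZv x.1 zv * Real.log (pZv x.1 zv / rv zv))
          + pX x * pZv x.1 zv * ∑ zt, pZt x zt * Real.log (pZt x zt / rt zt) := by
      intro zv
      calc (∑ zt, p ((zv, zt), x) *
            (Real.log (pZv x.1 zv / rv zv) + Real.log (pZt x zt / rt zt)))
          = ∑ zt, (pX x * (pZv x.1 zv * Real.log (pZv x.1 zv / rv zv)) * pZt x zt
              + pX x * pZv x.1 zv * (pZt x zt * Real.log (pZt x zt / rt zt))) := by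
            refine Finset.sum_congr rfl fun zt _ => ?_
            simp only [hpdef]
            ring
        _ = (∑ zt, pX x * (pZv x.1 zv * Real.log (pZv x.1 zv / rv zv)) * pZt x zt)
              + ∑ zt, pX x * pZv x.1 zv * (pZt x zt * Real.log (pZt x zt / rt zt)) :=
            Finset.sum_add_distrib
        _ = pX x * (pZv x.1 zv * Real.log (pZv x.1 zv / rv zv))
              + pX x * pZv x.1 zv * ∑ zt, pZt x zt * Real.log (pZt x zt / rt zt) := by
            rw [← Finset.mul_sum, ← Finset.mul_sum, hpZt1, mul_one]
    simp only [inner]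
    rw [Finset.sum_add_distrib, ← Finset.mul_sum, ← Finset.sum_mul, ← Finset.mul_sum,
      hpZv1, mul_one]
  have hH : (∑ z : 𝒵v × 𝒵t, ∑ x : 𝒳v × 𝒳t,
      p (z, x) * (Real.log (pZv x.1 z.1 / rv z.1) + Real.log (pZt x z.2 / rt z.2)))
      = (∑ xv, (∑ xt, pX (xv, xt)) * KLdiv (fun zv => pZv xv zv) rv)
        + ∑ x : 𝒳v × 𝒳t, pX x * KLdiv (fun zt => pZt x zt) rt := by
    rw [Finset.sum_comm]
    simp only [hx]
    rw [Finset.sum_add_distrib]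
    congr 1
    rw [Fintype.sum_prod_type]
    refine Finset.sum_congr rfl fun xv _ => ?_
    rw [Finset.sum_mul]
    rfl
  rw [hH]
  linarith
end
end
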